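/- Let ξ₁, ξ₂, … be IID Bernoulli(p) random variables and let δ > 0. Define, for each n ≥ 2, the interval Iₙ = { q : |q − p̂_{⌊⌊n⌋⌋}| < sqrt((2·ln(⌊log₂ n⌋) + ln(3.3/δ))/(2·⌊⌊n⌋⌋)) }, where ⌊⌊n⌋⌋ is the largest power of two 2^k with k ≥ 1 and 2^k ≤ n, and p̂_m is the empirical mean of the first m observations. Then P(∀ n ≥ 2 : p ∈ Iₙ) ≥ 1 − δ. -/

import Mathlib

open MeasureTheory ProbabilityTheory Real Finset
open scoped ENNReal

section Aux

lemma bern_gpos {p : ℝ} (hp0 : 0 ≤ p) (hp1 : p ≤ 1) (t : ℝ) :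
    0 < 1 - p + p * exp t := by
  rcases eq_or_lt_of_le hp0 with h | h
  · simp [← h]
  · have := exp_pos t
    nlinarith

lemma bern_mgf_le {p : ℝ} (hp0 : 0 ≤ p) (hp1 : p ≤ 1) (t : ℝ) :
    1 - p + p * exp t ≤ exp (p * t + t ^ 2 / 8) := by
  set g : ℝ → ℝ := fun t => 1 - p + p * exp t with hg_def
  have gpos : ∀ t, 0 < g t := fun t => bern_gpos hp0 hp1 t
  have hg : ∀ t, HasDerivAt g (p * exp t) t := fun t => by
    exact ((Real.hasDerivAt_exp t).const_mul p).const_add (1 - p)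
  -- F = derivative of f where f t = p t + t²/8 - log (g t)
  set F : ℝ → ℝ := fun t => p + t / 4 - p * exp t / g t with hF_def
  have hF : ∀ t, HasDerivAt (fun t => p * t + t ^ 2 / 8 - log (g t)) (F t) t := by
    intro t
    have h1 : HasDerivAt (fun t : ℝ => p * t) p t := by
      simpa using (hasDerivAt_id t).const_mul p
    have h2 : HasDerivAt (fun t : ℝ => t ^ 2 / 8) (t / 4) t := by
      have := (hasDerivAt_pow 2 t).div_const 8
      exact this.congr_deriv (by rw [show (2:ℕ) - 1 = 1 from rfl]; push_cast; ring)
    have h3 : HasDerivAt (fun t => log (g t)) (p * exp t / g t) t :=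
      (hg t).log (gpos t).ne'
    exact (h1.add h2).sub h3
  have hF' : ∀ t, HasDerivAt F
      (1 / 4 - (p * exp t * g t - p * exp t * (p * exp t)) / g t ^ 2) t := by
    intro t
    have h1 : HasDerivAt (fun t : ℝ => p + t / 4) (1 / 4) t := by
      simpa using ((hasDerivAt_id t).div_const 4).const_add p
    have h2 : HasDerivAt (fun t => p * exp t / g t)
        ((p * exp t * g t - p * exp t * (p * exp t)) / g t ^ 2) t := by
      exact HasDerivAt.div ((Real.hasDerivAt_exp t).const_mul p) (hg t) (gpos t).ne'
    exact h1.sub h2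
  have hF'nonneg : ∀ t, 0 ≤ 1 / 4 - (p * exp t * g t - p * exp t * (p * exp t)) / g t ^ 2 := by
    intro t
    rw [sub_nonneg, div_le_iff₀ (pow_pos (gpos t) 2)]
    have h := gpos t
    have he := exp_pos t
    nlinarith [sq_nonneg (1 - p - p * exp t)]
  have hFmono : Monotone F :=
    monotone_of_deriv_nonneg (fun t => (hF' t).differentiableAt)
      (fun t => by rw [(hF' t).deriv]; exact hF'nonneg t)
  have hF0 : F 0 = 0 := by simp [hF_def, hg_def]
  set f : ℝ → ℝ := fun t => p * t + t ^ 2 / 8 - log (g t) with hf_def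
  have hf0 : f 0 = 0 := by simp [hf_def, hg_def]
  have hfdiff : ∀ t, DifferentiableAt ℝ f t := fun t => (hF t).differentiableAt
  have hfderiv : ∀ t, deriv f t = F t := fun t => (hF t).deriv
  have hcont : Continuous f := continuous_iff_continuousAt.2 fun x => (hfdiff x).continuousAt
  have key : ∀ t, 0 ≤ f t := by
    intro t
    rcases le_total 0 t with h | h
    · have hmono : MonotoneOn f (Set.Ici 0) := by
        apply monotoneOn_of_deriv_nonneg (convex_Ici 0) hcont.continuousOn
          (fun x _ => (hfdiff x).differentiableWithinAt)
        intro x hx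
        rw [hfderiv x, ← hF0]
        exact hFmono (le_of_lt (by simpa using hx))
      have := hmono (Set.mem_Ici.2 le_rfl) (Set.mem_Ici.2 h) h
      rwa [hf0] at this
    · have hmono : AntitoneOn f (Set.Iic 0) := by
        apply antitoneOn_of_deriv_nonpos (convex_Iic 0) hcont.continuousOn
          (fun x _ => (hfdiff x).differentiableWithinAt)
        intro x hx
        rw [hfderiv x, ← hF0]
        rw [← hF0] at *
        exact hFmono (le_of_lt (by simpa using hx))
      have := hmono (Set.mem_Iic.2 h) (Set.mem_Iic.2 le_rfl) h
      rwa [hf0] at this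
  have hlog : log (g t) ≤ p * t + t ^ 2 / 8 := by
    have h := key t
    simp only [hf_def] at h
    linarith
  calc g t = exp (log (g t)) := (exp_log (gpos t)).symm
    _ ≤ exp (p * t + t ^ 2 / 8) := exp_le_exp.2 hlog

lemma tail_bound {Ω : Type*} [MeasurableSpace Ω] (μ : Measure Ω) [IsProbabilityMeasure μ]
    (ξ : ℕ → Ω → ℝ)
    (hmeas : ∀ i, Measurable (ξ i))
    (hindep : iIndepFun ξ μ)
    (hval : ∀ i ω, ξ i ω = 0 ∨ ξ i ω = 1)
    (p : ℝ) (hp : p ∈ Set.Icc (0 : ℝ) 1)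
    (hbern : ∀ i, (μ {ω | ξ i ω = 1}).toReal = p)
    (m : ℕ) (hm : 1 ≤ m) (ε : ℝ) (hε : 0 ≤ ε) :
    (μ {ω | ε ≤ |p - (1 / (m : ℝ)) * ∑ i ∈ Finset.range m, ξ i ω|}).toReal ≤
      2 * exp (-2 * m * ε ^ 2) := by
  obtain ⟨hp0, hp1⟩ := hp
  have hmpos : (0 : ℝ) < m := by exact_mod_cast hm
  have hexp_eq : ∀ (t : ℝ) i ω, exp (t * ξ i ω) = 1 + (exp t - 1) * ξ i ω := by
    intro t i ω
    rcases hval i ω with h | h <;> simp [h]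
  have hint_xi : ∀ i, Integrable (ξ i) μ := by
    intro i
    have : ξ i = Set.indicator {ω | ξ i ω = 1} (fun _ => (1 : ℝ)) := by
      funext ω
      rcases hval i ω with h | h <;>
        simp [Set.indicator_apply, Set.mem_setOf_eq, h]
    rw [this]
    exact (integrable_const (1 : ℝ)).indicator ((hmeas i) (measurableSet_singleton 1))
  have hint_exp : ∀ (t : ℝ) i, Integrable (fun ω => exp (t * ξ i ω)) μ := by
    intro t i
    simp_rw [hexp_eq t i]
    exact (integrable_const (1 : ℝ)).add ((hint_xi i).const_mul _)
  have hxi_int : ∀ i, ∫ ω, ξ i ω ∂μ = p := by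
    intro i
    have hind : ξ i = Set.indicator {ω | ξ i ω = 1} (fun _ => (1 : ℝ)) := by
      funext ω
      rcases hval i ω with h | h <;>
        simp [Set.indicator_apply, Set.mem_setOf_eq, h]
    have hms : MeasurableSet {ω | ξ i ω = 1} := (hmeas i) (measurableSet_singleton 1)
    rw [show (fun ω => ξ i ω) = ξ i from rfl, hind, integral_indicator_const _ hms]
    simp; exact hbern i
  have hmgf : ∀ (t : ℝ) i, mgf (ξ i) μ t = 1 - p + p * exp t := by
    intro t i
    rw [mgf]
    simp_rw [hexp_eq t i]
    rw [integral_add (integrable_const _) ((hint_xi i).const_mul _), integral_const,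
      integral_const_mul, hxi_int i]
    simp; ring
  have hmgf_sum : ∀ t : ℝ, mgf (∑ i ∈ Finset.range m, ξ i) μ t = (1 - p + p * exp t) ^ m := by
    intro t
    rw [hindep.mgf_sum hmeas]
    simp [hmgf t]
  have hint_sum : ∀ t : ℝ, Integrable (fun ω => exp (t * (∑ i ∈ Finset.range m, ξ i) ω)) μ :=
    fun t => hindep.integrable_exp_mul_sum hmeas (fun i _ => hint_exp t i)
  have hmgf_le : ∀ t : ℝ, mgf (∑ i ∈ Finset.range m, ξ i) μ t ≤ exp (m * (p * t + t ^ 2 / 8)) := by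
    intro t
    rw [hmgf_sum t]
    calc (1 - p + p * exp t) ^ m ≤ exp (p * t + t ^ 2 / 8) ^ m :=
          pow_le_pow_left₀ (bern_gpos hp0 hp1 t).le (bern_mgf_le hp0 hp1 t) m
      _ = exp ((m : ℝ) * (p * t + t ^ 2 / 8)) := by rw [← Real.exp_nat_mul]
  -- upper tail
  have hupper : (μ {ω | (m : ℝ) * (p + ε) ≤ (∑ i ∈ Finset.range m, ξ i) ω}).toReal ≤
      exp (-2 * m * ε ^ 2) := by
    have h := measure_ge_le_exp_mul_mgf (μ := μ) (X := ∑ i ∈ Finset.range m, ξ i)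
      (t := 4 * ε) ((m : ℝ) * (p + ε)) (by positivity) (hint_sum (4 * ε))
    refine h.trans ?_
    calc exp (-(4 * ε) * ((m : ℝ) * (p + ε))) * mgf (∑ i ∈ Finset.range m, ξ i) μ (4 * ε)
        ≤ exp (-(4 * ε) * ((m : ℝ) * (p + ε))) * exp (m * (p * (4 * ε) + (4 * ε) ^ 2 / 8)) := by
          exact mul_le_mul_of_nonneg_left (hmgf_le (4 * ε)) (exp_pos _).le
      _ = exp (-2 * m * ε ^ 2) := by rw [← Real.exp_add]; ring_nf
  -- lower tail
  have hlower : (μ {ω | (∑ i ∈ Finset.range m, ξ i) ω ≤ (m : ℝ) * (p - ε)}).toReal ≤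
      exp (-2 * m * ε ^ 2) := by
    have h := measure_le_le_exp_mul_mgf (μ := μ) (X := ∑ i ∈ Finset.range m, ξ i)
      (t := -(4 * ε)) ((m : ℝ) * (p - ε)) (by simpa using hε) (hint_sum (-(4 * ε)))
    refine h.trans ?_
    calc exp (-(-(4 * ε)) * ((m : ℝ) * (p - ε))) * mgf (∑ i ∈ Finset.range m, ξ i) μ (-(4 * ε))
        ≤ exp (-(-(4 * ε)) * ((m : ℝ) * (p - ε))) *
            exp (m * (p * (-(4 * ε)) + (-(4 * ε)) ^ 2 / 8)) :=
          mul_le_mul_of_nonneg_left (hmgf_le (-(4 * ε))) (exp_pos _).le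
      _ = exp (-2 * m * ε ^ 2) := by rw [← Real.exp_add]; ring_nf
  -- combine
  have hsub : {ω | ε ≤ |p - (1 / (m : ℝ)) * ∑ i ∈ Finset.range m, ξ i ω|} ⊆
      {ω | (m : ℝ) * (p + ε) ≤ (∑ i ∈ Finset.range m, ξ i) ω} ∪
      {ω | (∑ i ∈ Finset.range m, ξ i) ω ≤ (m : ℝ) * (p - ε)} := by
    intro ω hω
    simp only [Set.mem_setOf_eq] at hω
    rw [le_abs] at hω
    have hSeq : (∑ i ∈ Finset.range m, ξ i) ω = ∑ i ∈ Finset.range m, ξ i ω :=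
      Finset.sum_apply ω (Finset.range m) ξ
    have key : (m : ℝ) * ((1 / (m : ℝ)) * ∑ i ∈ Finset.range m, ξ i ω) =
        ∑ i ∈ Finset.range m, ξ i ω := by
      field_simp
    rcases hω with h | h
    · right
      simp only [Set.mem_setOf_eq, hSeq]
      nlinarith [mul_le_mul_of_nonneg_left h hmpos.le, key]
    · left
      simp only [Set.mem_setOf_eq, hSeq]
      nlinarith [mul_le_mul_of_nonneg_left h hmpos.le, key]
  calc (μ {ω | ε ≤ |p - (1 / (m : ℝ)) * ∑ i ∈ Finset.range m, ξ i ω|}).toReal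
      ≤ (μ ({ω | (m : ℝ) * (p + ε) ≤ (∑ i ∈ Finset.range m, ξ i) ω} ∪
          {ω | (∑ i ∈ Finset.range m, ξ i) ω ≤ (m : ℝ) * (p - ε)})).toReal := by
        exact ENNReal.toReal_mono (measure_ne_top μ _) (measure_mono hsub)
    _ ≤ ((μ {ω | (m : ℝ) * (p + ε) ≤ (∑ i ∈ Finset.range m, ξ i) ω}) +
          μ {ω | (∑ i ∈ Finset.range m, ξ i) ω ≤ (m : ℝ) * (p - ε)}).toReal :=
        ENNReal.toReal_mono (by finiteness) (measure_union_le _ _)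
    _ = _ + _ := ENNReal.toReal_add (measure_ne_top μ _) (measure_ne_top μ _)
    _ ≤ exp (-2 * m * ε ^ 2) + exp (-2 * m * ε ^ 2) := add_le_add hupper hlower
    _ = 2 * exp (-2 * m * ε ^ 2) := by ring

end Aux

theorem stmt_18 {Ω : Type*} [MeasurableSpace Ω] (μ : Measure Ω) [IsProbabilityMeasure μ]
    (ξ : ℕ → Ω → ℝ)
    (hmeas : ∀ i, Measurable (ξ i))
    (hindep : iIndepFun ξ μ)
    (hval : ∀ i ω, ξ i ω = 0 ∨ ξ i ω = 1)
    (p : ℝ) (hp : p ∈ Set.Icc (0 : ℝ) 1)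
    (hbern : ∀ i, (μ {ω | ξ i ω = 1}).toReal = p)
    (δ : ℝ) (hδ : 0 < δ) :
    ENNReal.ofReal (1 - δ) ≤
      μ {ω | ∀ n : ℕ, 2 ≤ n →
        |p - (1 / (2 ^ Nat.log 2 n : ℝ)) *
            ∑ i ∈ Finset.range (2 ^ Nat.log 2 n), ξ i ω| <
          Real.sqrt ((2 * Real.log (Nat.log 2 n) + Real.log (3.3 / δ)) /
            (2 * 2 ^ Nat.log 2 n))} := by
  rcases le_or_gt 1 δ with hδ1 | hδ1
  · rw [ENNReal.ofReal_eq_zero.2 (by linarith)]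
    exact bot_le
  set L : ℝ := Real.log (3.3 / δ) with hL_def
  have hL : 0 < L := Real.log_pos (by rw [lt_div_iff₀ hδ] ; linarith)
  -- abbreviation for the inner property
  set Q : Ω → ℕ → Prop := fun ω k =>
    |p - (1 / (2 ^ k : ℝ)) * ∑ i ∈ Finset.range (2 ^ k), ξ i ω| <
      Real.sqrt ((2 * Real.log k + L) / (2 * 2 ^ k)) with hQ_def
  have hset : {ω | ∀ n : ℕ, 2 ≤ n →
        |p - (1 / (2 ^ Nat.log 2 n : ℝ)) *
            ∑ i ∈ Finset.range (2 ^ Nat.log 2 n), ξ i ω| <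
          Real.sqrt ((2 * Real.log (Nat.log 2 n) + Real.log (3.3 / δ)) /
            (2 * 2 ^ Nat.log 2 n))} = {ω | ∀ k : ℕ, 1 ≤ k → Q ω k} := by
    ext ω
    simp only [Set.mem_setOf_eq, hQ_def, ← hL_def]
    constructor
    · intro h k hk
      have h2 : 2 ≤ 2 ^ k := by
        calc 2 = 2 ^ 1 := rfl
          _ ≤ 2 ^ k := Nat.pow_le_pow_right (by norm_num) hk
      have := h (2 ^ k) h2
      rwa [Nat.log_pow (by norm_num)] at this
    · intro h n hn
      refine h (Nat.log 2 n) ?_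
      have h22 : Nat.log 2 2 = 1 := by simpa using Nat.log_pow (by norm_num : 1 < 2) 1
      have : Nat.log 2 2 ≤ Nat.log 2 n := Nat.log_mono_right hn
      rwa [h22] at this
  rw [hset]
  -- measurability
  have hQmeas : ∀ k : ℕ, MeasurableSet {ω | Q ω k} := by
    intro k
    have hf : Measurable fun ω =>
        |p - (1 / (2 ^ k : ℝ)) * ∑ i ∈ Finset.range (2 ^ k), ξ i ω| := by
      apply Measurable.abs
      exact measurable_const.sub
        ((Finset.measurable_sum (Finset.range (2 ^ k)) fun i _ => hmeas i).const_mul _)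
    exact measurableSet_lt hf measurable_const
  have hTmeas : MeasurableSet {ω | ∀ k : ℕ, 1 ≤ k → Q ω k} := by
    have : {ω | ∀ k : ℕ, 1 ≤ k → Q ω k} = ⋂ k, ⋂ (_ : 1 ≤ k), {ω | Q ω k} := by
      ext ω; simp
    rw [this]
    exact MeasurableSet.iInter fun k => MeasurableSet.iInter fun _ => hQmeas k
  -- bound on complement
  have hcompl : μ {ω | ∀ k : ℕ, 1 ≤ k → Q ω k}ᶜ ≤ ENNReal.ofReal δ := by
    have hsub : {ω | ∀ k : ℕ, 1 ≤ k → Q ω k}ᶜ ⊆ ⋃ j : ℕ, {ω | Q ω (j + 1)}ᶜ := by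
      intro ω hω
      simp only [Set.mem_compl_iff, Set.mem_setOf_eq, not_forall] at hω
      obtain ⟨k, hk, hQk⟩ := hω
      obtain ⟨j, rfl⟩ := Nat.exists_eq_add_of_le hk
      exact Set.mem_iUnion.2 ⟨j, by simpa [Nat.add_comm] using hQk⟩
    refine le_trans (measure_mono hsub) (le_trans (measure_iUnion_le _) ?_)
    -- bound each term
    have hterm : ∀ j : ℕ, μ {ω | Q ω (j + 1)}ᶜ ≤
        ENNReal.ofReal (2 * exp (-L) * (1 / ((j : ℝ) + 1) ^ 2)) := by
      intro j
      set k := j + 1 with hk_def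
      have hk1 : 1 ≤ k := Nat.le_add_left 1 j
      have hkR : (0 : ℝ) < k := by exact_mod_cast hk1
      have hlogk : 0 ≤ Real.log k := Real.log_nonneg (by exact_mod_cast hk1)
      set ε : ℝ := Real.sqrt ((2 * Real.log k + L) / (2 * 2 ^ k)) with hε_def
      have harg : 0 ≤ (2 * Real.log k + L) / (2 * 2 ^ k) := by positivity
      have hε2 : ε ^ 2 = (2 * Real.log k + L) / (2 * 2 ^ k) := Real.sq_sqrt harg
      have hce : {ω | Q ω k}ᶜ =
          {ω | ε ≤ |p - (1 / ((2 ^ k : ℕ) : ℝ)) * ∑ i ∈ Finset.range (2 ^ k), ξ i ω|} := by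
        ext ω
        simp only [Set.mem_compl_iff, Set.mem_setOf_eq, hQ_def, not_lt, hε_def]
        push_cast
        rfl
      rw [hce]
      rw [← ENNReal.ofReal_toReal (measure_ne_top μ _)]
      apply ENNReal.ofReal_le_ofReal
      refine le_trans (tail_bound μ ξ hmeas hindep hval p hp hbern (2 ^ k)
        (Nat.one_le_two_pow) ε (Real.sqrt_nonneg _)) ?_
      have hexp_eq : -2 * (((2 ^ k : ℕ)) : ℝ) * ε ^ 2 = -(2 * Real.log k + L) := by
        rw [hε2]
        have h2k : (0 : ℝ) < (2 : ℝ) ^ k := by positivity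
        push_cast
        field_simp
      rw [hexp_eq]
      have : exp (-(2 * Real.log k + L)) = exp (-L) * (1 / ((k : ℝ)) ^ 2) := by
        rw [show -(2 * Real.log k + L) = -L + (-2 * Real.log k) by ring, Real.exp_add]
        congr 1
        rw [show (-2 : ℝ) * Real.log k = -Real.log ((k : ℝ) ^ 2) by
          rw [Real.log_pow]; push_cast; ring]
        rw [Real.exp_neg, Real.exp_log (by positivity), one_div]
      rw [this]
      have : ((k : ℝ)) = (j : ℝ) + 1 := by push_cast [hk_def]; ring
      rw [this]
      exact le_of_eq (by ring)
    refine le_trans (ENNReal.tsum_le_tsum hterm) ?_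
    -- sum the series
    have h2 : HasSum (fun j : ℕ => (1 : ℝ) / ((j : ℝ) + 1) ^ 2) (π ^ 2 / 6) := by
      have h' : HasSum (fun n : ℕ => (1 : ℝ) / (((n + 1 : ℕ)) : ℝ) ^ 2) (π ^ 2 / 6) := by
        apply (hasSum_nat_add_iff (f := fun n : ℕ => (1 : ℝ) / (n : ℝ) ^ 2) 1).2
        simpa using hasSum_zeta_two
      have heqf : (fun n : ℕ => (1 : ℝ) / (((n + 1 : ℕ)) : ℝ) ^ 2) =
          fun j : ℕ => (1 : ℝ) / ((j : ℝ) + 1) ^ 2 := by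
        funext n; push_cast; ring
      rwa [heqf] at h'
    have h3 : HasSum (fun j : ℕ => 2 * exp (-L) * ((1 : ℝ) / ((j : ℝ) + 1) ^ 2))
        (2 * exp (-L) * (π ^ 2 / 6)) := h2.mul_left _
    have hsum_eq : ∑' j : ℕ, ENNReal.ofReal (2 * exp (-L) * (1 / ((j : ℝ) + 1) ^ 2)) =
        ENNReal.ofReal (2 * exp (-L) * (π ^ 2 / 6)) := by
      rw [← h3.tsum_eq]
      exact (ENNReal.ofReal_tsum_of_nonneg (fun j => by positivity) h3.summable).symm
    rw [hsum_eq]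
    apply ENNReal.ofReal_le_ofReal
    have hexpL : exp (-L) = δ / 3.3 := by
      rw [hL_def, Real.exp_neg, Real.exp_log (by positivity), inv_div]
    rw [hexpL]
    have hπ : π ^ 2 ≤ 9.9 := by nlinarith [Real.pi_lt_d6, Real.pi_pos]
    calc 2 * (δ / 3.3) * (π ^ 2 / 6) = δ * π ^ 2 / 9.9 := by ring
      _ ≤ δ * 9.9 / 9.9 := by gcongr
      _ = δ := by ring
  -- conclude
  have hadd : μ {ω | ∀ k : ℕ, 1 ≤ k → Q ω k} + μ {ω | ∀ k : ℕ, 1 ≤ k → Q ω k}ᶜ = 1 := by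
    rw [measure_add_measure_compl (μ := μ) hTmeas, measure_univ]
  have heq : (1 : ℝ≥0∞) - μ {ω | ∀ k : ℕ, 1 ≤ k → Q ω k}ᶜ = μ {ω | ∀ k : ℕ, 1 ≤ k → Q ω k} :=
    ENNReal.sub_eq_of_eq_add (measure_ne_top μ _) hadd.symm
  calc ENNReal.ofReal (1 - δ) = 1 - ENNReal.ofReal δ := by
        rw [ENNReal.ofReal_sub _ hδ.le, ENNReal.ofReal_one]
    _ ≤ 1 - μ {ω | ∀ k : ℕ, 1 ≤ k → Q ω k}ᶜ := tsub_le_tsub_left hcompl 1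
    _ = μ {ω | ∀ k : ℕ, 1 ≤ k → Q ω k} := heq
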